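/- arXiv:2201.10762 — 5 statements merged into one kernel-verified Lean document; each statement's English description precedes it below -/
import Mathlib

section
/- Let d ≥ 1, let A₀ ∈ ℝ^{d×d}, let Q ∈ ℂ^{d×d} be invertible and let J ∈ ℂ^{d×d} be in Jordan normal form with A₀ = Q J Q⁻¹ (viewing A₀ as a complex matrix). Let κ'(A₀) denote the smallest real part of the eigenvalues of A₀, and let κ̲(QQ^H) and κ̄(QQ^H) denote the smallest and largest eigenvalues of the Hermitian positive definite matrix QQ^H (Q^H the conjugate transpose of Q). Then for every t ≥ 0: ‖exp(−tA₀)‖ ≤ √(κ̄(QQ^H)/κ̲(QQ^H)) · e^{(1−κ'(A₀))t}. -/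
open scoped Matrix

/-- A complex `d × d` matrix is in Jordan normal form if it vanishes off the diagonal and
superdiagonal, the superdiagonal entries are `0` or `1`, and a superdiagonal entry `1` forces
the two adjacent diagonal entries (eigenvalues) to coincide. -/
def IsJordanNF {d : ℕ} (J : Matrix (Fin d) (Fin d) ℂ) : Prop :=
  (∀ i j : Fin d, (j : ℕ) ≠ (i : ℕ) → (j : ℕ) ≠ (i : ℕ) + 1 → J i j = 0) ∧
  (∀ i j : Fin d, (j : ℕ) = (i : ℕ) + 1 → J i j = 0 ∨ J i j = 1) ∧
  (∀ i j : Fin d, (j : ℕ) = (i : ℕ) + 1 → J i j = 1 → J i i = J j j)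

namespace MatrixExpAux

open scoped Matrix.Norms.L2Operator

variable {d : ℕ}

section Norms

variable {𝕜 : Type*} [RCLike 𝕜]

lemma euclid_norm_symm (x : Fin d → 𝕜) :
    ‖(WithLp.equiv 2 (Fin d → 𝕜)).symm x‖ = Real.sqrt (∑ i, ‖x i‖ ^ 2) := by
  rw [EuclideanSpace.norm_eq]
  simp [WithLp.equiv_symm_apply, PiLp.toLp_apply]

lemma opNorm_le_of_mulVec {A : Matrix (Fin d) (Fin d) 𝕜} {C : ℝ} (hC : 0 ≤ C)
    (h : ∀ x : Fin d → 𝕜, ∑ i, ‖(A *ᵥ x) i‖ ^ 2 ≤ C ^ 2 * ∑ i, ‖x i‖ ^ 2) :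
    ‖A‖ ≤ C := by
  rw [Matrix.cstar_norm_def]
  refine ContinuousLinearMap.opNorm_le_bound _ hC fun x => ?_
  obtain ⟨y, rfl⟩ := (WithLp.equiv 2 (Fin d → 𝕜)).symm.surjective x
  rw [show (Matrix.toEuclideanCLM (𝕜 := 𝕜) A ((WithLp.equiv 2 (Fin d → 𝕜)).symm y)) =
      (WithLp.equiv 2 (Fin d → 𝕜)).symm (A *ᵥ y) from rfl]
  rw [euclid_norm_symm, euclid_norm_symm]
  calc Real.sqrt (∑ i, ‖(A *ᵥ y) i‖ ^ 2) ≤ Real.sqrt (C ^ 2 * ∑ i, ‖y i‖ ^ 2) :=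
        Real.sqrt_le_sqrt (h y)
    _ = C * Real.sqrt (∑ i, ‖y i‖ ^ 2) := by
        rw [Real.sqrt_mul (sq_nonneg C), Real.sqrt_sq hC]

lemma sum_sq_mulVec_le (A : Matrix (Fin d) (Fin d) 𝕜) (x : Fin d → 𝕜) :
    ∑ i, ‖(A *ᵥ x) i‖ ^ 2 ≤ ‖A‖ ^ 2 * ∑ i, ‖x i‖ ^ 2 := by
  have h : Real.sqrt (∑ i, ‖(A *ᵥ x) i‖ ^ 2) ≤ ‖A‖ * Real.sqrt (∑ i, ‖x i‖ ^ 2) := by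
    have h0 := A.l2_opNorm_mulVec ((WithLp.equiv 2 (Fin d → 𝕜)).symm x)
    rw [show ((EuclideanSpace.equiv (Fin d) 𝕜).symm <| A *ᵥ ((WithLp.equiv 2 (Fin d → 𝕜)).symm x))
        = (WithLp.equiv 2 (Fin d → 𝕜)).symm (A *ᵥ x) from rfl] at h0
    rwa [euclid_norm_symm, euclid_norm_symm] at h0
  have h1 : 0 ≤ ∑ i, ‖(A *ᵥ x) i‖ ^ 2 := Finset.sum_nonneg fun i _ => sq_nonneg _
  have h2 : 0 ≤ ∑ i, ‖x i‖ ^ 2 := Finset.sum_nonneg fun i _ => sq_nonneg _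
  calc (∑ i, ‖(A *ᵥ x) i‖ ^ 2) = Real.sqrt (∑ i, ‖(A *ᵥ x) i‖ ^ 2) ^ 2 :=
        (Real.sq_sqrt h1).symm
    _ ≤ (‖A‖ * Real.sqrt (∑ i, ‖x i‖ ^ 2)) ^ 2 :=
        pow_le_pow_left₀ (Real.sqrt_nonneg _) h 2
    _ = ‖A‖ ^ 2 * ∑ i, ‖x i‖ ^ 2 := by rw [mul_pow, Real.sq_sqrt h2]

lemma opNorm_diagonal_le {w : Fin d → 𝕜} {C : ℝ} (hC : 0 ≤ C) (h : ∀ i, ‖w i‖ ≤ C) :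
    ‖Matrix.diagonal w‖ ≤ C := by
  refine opNorm_le_of_mulVec hC fun x => ?_
  rw [Finset.mul_sum]
  refine Finset.sum_le_sum fun i _ => ?_
  rw [Matrix.mulVec_diagonal, norm_mul, mul_pow]
  have h1 : ‖w i‖ ^ 2 ≤ C ^ 2 := pow_le_pow_left₀ (norm_nonneg _) (h i) 2
  exact mul_le_mul_of_nonneg_right h1 (sq_nonneg _)

end Norms

lemma re_star_dot_self (x : Fin d → ℂ) :
    (dotProduct (star x) x).re = ∑ i, ‖x i‖ ^ 2 := by
  rw [dotProduct, Complex.re_sum]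
  refine Finset.sum_congr rfl fun i _ => ?_
  simp [Pi.star_apply, Complex.mul_re, Complex.sq_norm, Complex.normSq_apply]

lemma sum_sq_star_unitary_mulVec {U : Matrix (Fin d) (Fin d) ℂ}
    (hU : U ∈ Matrix.unitaryGroup (Fin d) ℂ) (x : Fin d → ℂ) :
    ∑ i, ‖(star U *ᵥ x) i‖ ^ 2 = ∑ i, ‖x i‖ ^ 2 := by
  rw [← re_star_dot_self, ← re_star_dot_self]
  congr 1
  rw [Matrix.star_mulVec, Matrix.star_eq_conjTranspose, Matrix.conjTranspose_conjTranspose,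
    ← Matrix.dotProduct_mulVec, Matrix.mulVec_mulVec, ← Matrix.star_eq_conjTranspose U,
    Matrix.mem_unitaryGroup_iff.mp hU, Matrix.one_mulVec]

lemma re_qf_eq {M : Matrix (Fin d) (Fin d) ℂ} (hM : M.IsHermitian) (x : Fin d → ℂ) :
    (dotProduct (star x) (M *ᵥ x)).re =
      ∑ i, hM.eigenvalues i *
        ‖(star (hM.eigenvectorUnitary : Matrix (Fin d) (Fin d) ℂ) *ᵥ x) i‖ ^ 2 := by
  set U : Matrix (Fin d) (Fin d) ℂ := (hM.eigenvectorUnitary : Matrix (Fin d) (Fin d) ℂ) with hU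
  set y := star U *ᵥ x with hy
  have hsy : star x ᵥ* U = star y := by
    rw [hy, Matrix.star_mulVec, Matrix.star_eq_conjTranspose, Matrix.conjTranspose_conjTranspose]
  conv_lhs => rw [hM.spectral_theorem, Unitary.conjStarAlgAut_apply]
  rw [← Matrix.mulVec_mulVec, ← Matrix.mulVec_mulVec, Matrix.dotProduct_mulVec, hsy, ← hy,
    dotProduct, Complex.re_sum]
  refine Finset.sum_congr rfl fun i _ => ?_
  rw [Matrix.mulVec_diagonal]
  have : ∀ (c : ℝ) (z : ℂ), (star z * ((c : ℂ) * z)).re = c * ‖z‖ ^ 2 := by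
    intro c z
    rw [mul_left_comm, Complex.star_def, ← Complex.normSq_eq_conj_mul_self]
    simp [Complex.normSq_eq_norm_sq, ← Complex.ofReal_pow]
  exact this _ _

lemma qf_le_of_eigenvalues {M : Matrix (Fin d) (Fin d) ℂ} (hM : M.IsHermitian) {hi : ℝ}
    (h : ∀ i, hM.eigenvalues i ≤ hi) (x : Fin d → ℂ) :
    (dotProduct (star x) (M *ᵥ x)).re ≤ hi * ∑ i, ‖x i‖ ^ 2 := by
  rw [re_qf_eq hM x, ← sum_sq_star_unitary_mulVec hM.eigenvectorUnitary.2 x, Finset.mul_sum]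
  exact Finset.sum_le_sum fun i _ => mul_le_mul_of_nonneg_right (h i) (sq_nonneg _)

lemma le_qf_of_eigenvalues {M : Matrix (Fin d) (Fin d) ℂ} (hM : M.IsHermitian) {lo : ℝ}
    (h : ∀ i, lo ≤ hM.eigenvalues i) (x : Fin d → ℂ) :
    lo * ∑ i, ‖x i‖ ^ 2 ≤ (dotProduct (star x) (M *ᵥ x)).re := by
  rw [re_qf_eq hM x, ← sum_sq_star_unitary_mulVec hM.eigenvectorUnitary.2 x, Finset.mul_sum]
  exact Finset.sum_le_sum fun i _ => mul_le_mul_of_nonneg_right (h i) (sq_nonneg _)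

lemma star_dot_conjTranspose_mulVec (Q : Matrix (Fin d) (Fin d) ℂ) (x : Fin d → ℂ) :
    dotProduct (star (Qᴴ *ᵥ x)) (Qᴴ *ᵥ x) =
      dotProduct (star x) ((Q * Qᴴ) *ᵥ x) := by
  rw [Matrix.star_mulVec, Matrix.conjTranspose_conjTranspose, ← Matrix.dotProduct_mulVec,
    Matrix.mulVec_mulVec]

open scoped ComplexOrder in
lemma posDef_mul_conjTranspose_self {Q : Matrix (Fin d) (Fin d) ℂ} (hQ : IsUnit Q) :
    (Q * Qᴴ).PosDef := by
  refine Matrix.PosDef.of_dotProduct_mulVec_pos (Matrix.isHermitian_mul_conjTranspose_self Q) fun x hx => ?_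
  rw [← star_dot_conjTranspose_mulVec, Matrix.dotProduct_star_self_pos_iff]
  intro h0
  apply hx
  have hQH : IsUnit Qᴴ := by
    rw [Matrix.isUnit_iff_isUnit_det, Matrix.det_conjTranspose]
    exact ((Matrix.isUnit_iff_isUnit_det Q).mp hQ).star
  have hid : (Qᴴ)⁻¹ *ᵥ (Qᴴ *ᵥ x) = x := by
    rw [Matrix.mulVec_mulVec, Matrix.nonsing_inv_mul _ ((Matrix.isUnit_iff_isUnit_det _).mp hQH),
      Matrix.one_mulVec]
  rw [← hid, h0, Matrix.mulVec_zero]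

lemma norm_conjTranspose_le {Q : Matrix (Fin d) (Fin d) ℂ}
    (hM : (Q * Qᴴ).IsHermitian) {hi : ℝ} (hhi : 0 ≤ hi)
    (h : ∀ i, hM.eigenvalues i ≤ hi) : ‖Qᴴ‖ ≤ Real.sqrt hi := by
  refine opNorm_le_of_mulVec (Real.sqrt_nonneg _) fun x => ?_
  rw [Real.sq_sqrt hhi, ← re_star_dot_self]
  rw [star_dot_conjTranspose_mulVec]
  exact qf_le_of_eigenvalues hM h x

lemma norm_inv_le {Q : Matrix (Fin d) (Fin d) ℂ} (hQ : IsUnit Q)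
    (hM : (Q * Qᴴ).IsHermitian) {lo : ℝ} (hlo : 0 < lo)
    (h : ∀ i, lo ≤ hM.eigenvalues i) : ‖Q⁻¹‖ ≤ (Real.sqrt lo)⁻¹ := by
  have hQH : IsUnit Qᴴ.det := by
    rw [Matrix.det_conjTranspose]
    exact ((Matrix.isUnit_iff_isUnit_det Q).mp hQ).star
  rw [← Matrix.l2_opNorm_conjTranspose, Matrix.conjTranspose_nonsing_inv]
  refine opNorm_le_of_mulVec (by positivity) fun y => ?_
  set x := (Qᴴ)⁻¹ *ᵥ y with hx
  have hyx : Qᴴ *ᵥ x = y := by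
    rw [hx, Matrix.mulVec_mulVec, Matrix.mul_nonsing_inv _ hQH, Matrix.one_mulVec]
  have hlow : lo * ∑ i, ‖x i‖ ^ 2 ≤ ∑ i, ‖y i‖ ^ 2 := by
    have h1 := le_qf_of_eigenvalues hM h x
    rw [← star_dot_conjTranspose_mulVec, hyx, re_star_dot_self] at h1
    exact h1
  have h2 : ((Real.sqrt lo)⁻¹) ^ 2 = lo⁻¹ := by
    rw [inv_pow, Real.sq_sqrt hlo.le]
  rw [h2]
  have hinv : (0:ℝ) ≤ lo⁻¹ := (inv_pos.mpr hlo).le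
  calc ∑ i, ‖x i‖ ^ 2 = lo⁻¹ * (lo * ∑ i, ‖x i‖ ^ 2) := by
        field_simp
    _ ≤ lo⁻¹ * ∑ i, ‖y i‖ ^ 2 := mul_le_mul_of_nonneg_left hlow hinv

lemma norm_one_le : ‖(1 : Matrix (Fin d) (Fin d) ℂ)‖ ≤ 1 := by
  rw [Matrix.cstar_norm_def, map_one]
  exact ContinuousLinearMap.norm_id_le

lemma norm_exp_le (A : Matrix (Fin d) (Fin d) ℂ) :
    ‖NormedSpace.exp A‖ ≤ Real.exp ‖A‖ := by
  have hpow : ∀ n : ℕ, ‖A ^ n‖ ≤ ‖A‖ ^ n := by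
    intro n
    cases n with
    | zero => simpa using norm_one_le
    | succ n => exact norm_pow_le' A n.succ_pos
  have hbound : ∀ n : ℕ, ‖((n.factorial : ℝ)⁻¹) • A ^ n‖ ≤ ‖A‖ ^ n / n.factorial := by
    intro n
    rw [norm_smul, Real.norm_eq_abs, abs_of_nonneg (by positivity), div_eq_inv_mul]
    exact mul_le_mul_of_nonneg_left (hpow n) (by positivity)
  have hsum2 : Summable (fun n : ℕ => ‖A‖ ^ n / n.factorial) :=
    Real.summable_pow_div_factorial ‖A‖
  have hsum : Summable (fun n : ℕ => ‖((n.factorial : ℝ)⁻¹) • A ^ n‖) :=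
    Summable.of_nonneg_of_le (fun n => norm_nonneg _) hbound hsum2
  rw [NormedSpace.exp_eq_tsum (𝕂 := ℝ)]
  calc ‖∑' n : ℕ, ((n.factorial : ℝ)⁻¹) • A ^ n‖ ≤ ∑' n : ℕ, ‖((n.factorial : ℝ)⁻¹) • A ^ n‖ :=
        norm_tsum_le_tsum_norm hsum
    _ ≤ ∑' n : ℕ, ‖A‖ ^ n / n.factorial := Summable.tsum_le_tsum hbound hsum hsum2
    _ = Real.exp ‖A‖ := by
        rw [Real.exp_eq_exp_ℝ, NormedSpace.exp_eq_tsum_div]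

lemma map_ofReal_exp (M : Matrix (Fin d) (Fin d) ℝ) :
    (NormedSpace.exp M).map Complex.ofReal =
      NormedSpace.exp (M.map Complex.ofReal) := by
  have hc : Continuous (fun A : Matrix (Fin d) (Fin d) ℝ => A.map Complex.ofReal) := by
    refine continuous_pi fun i => continuous_pi fun j => ?_
    exact Complex.continuous_ofReal.comp ((continuous_apply j).comp (continuous_apply i))
  exact open scoped Matrix.Norms.Operator in NormedSpace.map_exp (Complex.ofRealHom.mapMatrix (m := Fin d)) hc M

lemma real_transfer (M : Matrix (Fin d) (Fin d) ℝ) :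
    ‖Matrix.toEuclideanCLM (𝕜 := ℝ) M‖ ≤ ‖M.map Complex.ofReal‖ := by
  refine ContinuousLinearMap.opNorm_le_bound _ (norm_nonneg _) fun x => ?_
  obtain ⟨y, rfl⟩ := (WithLp.equiv 2 (Fin d → ℝ)).symm.surjective x
  rw [show (Matrix.toEuclideanCLM (𝕜 := ℝ) M ((WithLp.equiv 2 (Fin d → ℝ)).symm y)) =
      (WithLp.equiv 2 (Fin d → ℝ)).symm (M *ᵥ y) from rfl]
  rw [euclid_norm_symm, euclid_norm_symm]
  have hmv : (M.map Complex.ofReal) *ᵥ (fun i => (y i : ℂ)) = fun i => ((M *ᵥ y) i : ℂ) := by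
    funext i
    simp only [Matrix.mulVec, dotProduct, Matrix.map_apply]
    push_cast
    rfl
  have hsum : ∀ i, ‖((M *ᵥ y) i : ℂ)‖ = ‖(M *ᵥ y) i‖ := fun i => Complex.norm_real _
  have h := sum_sq_mulVec_le (M.map Complex.ofReal) (fun i => (y i : ℂ))
  rw [hmv] at h
  simp only [Complex.norm_real] at h
  calc Real.sqrt (∑ i, ‖(M *ᵥ y) i‖ ^ 2)
      ≤ Real.sqrt (‖M.map Complex.ofReal‖ ^ 2 * ∑ i, ‖y i‖ ^ 2) := Real.sqrt_le_sqrt h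
    _ = ‖M.map Complex.ofReal‖ * Real.sqrt (∑ i, ‖y i‖ ^ 2) := by
        rw [Real.sqrt_mul (sq_nonneg _), Real.sqrt_sq (norm_nonneg _)]


lemma nilpotent_entry_eq_zero {J : Matrix (Fin d) (Fin d) ℂ} (hJ : IsJordanNF J)
    {k i : Fin d} (h : (i : ℕ) ≠ (k : ℕ) + 1) :
    (J - Matrix.diagonal (fun l => J l l)) k i = 0 := by
  by_cases hik : i = k
  · subst hik
    simp [Matrix.sub_apply, Matrix.diagonal_apply_eq]
  · rw [Matrix.sub_apply, Matrix.diagonal_apply_ne _ (Ne.symm hik),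
      hJ.1 k i (fun hc => hik (Fin.ext hc)) h, sub_zero]

lemma nilpotent_entry_norm_le {J : Matrix (Fin d) (Fin d) ℂ} (hJ : IsJordanNF J)
    (k i : Fin d) : ‖(J - Matrix.diagonal (fun l => J l l)) k i‖ ≤ 1 := by
  by_cases h : (i : ℕ) = (k : ℕ) + 1
  · have hik : k ≠ i := by
      intro hc
      subst hc
      omega
    rw [Matrix.sub_apply, Matrix.diagonal_apply_ne _ hik, sub_zero]
    rcases hJ.2.1 k i h with h0 | h1
    · rw [h0]; simp
    · rw [h1]; simp
  · rw [nilpotent_entry_eq_zero hJ h]; simp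

lemma norm_nilpotent_le {J : Matrix (Fin d) (Fin d) ℂ} (hJ : IsJordanNF J) :
    ‖J - Matrix.diagonal (fun l => J l l)‖ ≤ 1 := by
  set N := J - Matrix.diagonal (fun l => J l l) with hNdef
  have hzero : ∀ (k i : Fin d), (i : ℕ) ≠ (k : ℕ) + 1 → N k i = 0 := by
    intro k i h
    rw [hNdef]
    exact nilpotent_entry_eq_zero hJ h
  have hnorm : ∀ (k i : Fin d), ‖N k i‖ ≤ 1 := by
    intro k i
    rw [hNdef]
    exact nilpotent_entry_norm_le hJ k i
  have hsq : ‖N‖ * ‖N‖ = ‖Nᴴ * N‖ := (Matrix.l2_opNorm_conjTranspose_mul_self N).symm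
  have hdiag : Nᴴ * N = Matrix.diagonal (fun j => (Nᴴ * N) j j) := by
    ext i j
    by_cases hij : i = j
    · subst hij; rw [Matrix.diagonal_apply_eq]
    · rw [Matrix.diagonal_apply_ne _ hij, Matrix.mul_apply]
      refine Finset.sum_eq_zero fun k _ => ?_
      rw [Matrix.conjTranspose_apply]
      by_cases hik : (i : ℕ) = (k : ℕ) + 1
      · have hjk : (j : ℕ) ≠ (k : ℕ) + 1 := fun hc => hij (Fin.ext (hik.trans hc.symm))
        rw [hzero k j hjk, mul_zero]
      · rw [hzero k i hik, star_zero, zero_mul]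
  have hdiagbound : ∀ j, ‖(Nᴴ * N) j j‖ ≤ 1 := by
    intro j
    rw [Matrix.mul_apply]
    by_cases hex : ∃ k : Fin d, (j : ℕ) = (k : ℕ) + 1
    · obtain ⟨k0, hk0⟩ := hex
      rw [Finset.sum_eq_single k0]
      · rw [Matrix.conjTranspose_apply, norm_mul, norm_star]
        exact mul_le_one₀ (hnorm k0 j) (norm_nonneg _) (hnorm k0 j)
      · intro k _ hkne
        have hjk : (j : ℕ) ≠ (k : ℕ) + 1 := by
          intro hc
          exact hkne (Fin.ext (by omega))
        rw [Matrix.conjTranspose_apply, hzero k j hjk, mul_zero]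
      · intro hcon
        exact absurd (Finset.mem_univ k0) hcon
    · have hz : ∀ k ∈ (Finset.univ : Finset (Fin d)), Nᴴ j k * N k j = 0 := by
        intro k _
        rw [Matrix.conjTranspose_apply, hzero k j (fun hc => hex ⟨k, hc⟩), star_zero, zero_mul]
      rw [show ∑ k, Nᴴ j k * N k j = 0 from Finset.sum_eq_zero hz]
      simp
  have h1 : ‖Nᴴ * N‖ ≤ 1 := by
    rw [hdiag]
    exact opNorm_diagonal_le zero_le_one hdiagbound
  nlinarith [norm_nonneg N]

lemma commute_diag {J : Matrix (Fin d) (Fin d) ℂ} (hJ : IsJordanNF J) :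
    Matrix.diagonal (fun l => J l l) * J = J * Matrix.diagonal (fun l => J l l) := by
  ext i j
  rw [Matrix.diagonal_mul, Matrix.mul_diagonal]
  by_cases hij : i = j
  · subst hij; exact mul_comm _ _
  · by_cases hsucc : (j : ℕ) = (i : ℕ) + 1
    · rcases hJ.2.1 i j hsucc with h0 | h1
      · rw [h0, mul_zero, zero_mul]
      · rw [hJ.2.2 i j hsucc h1]
        exact mul_comm _ _
    · rw [hJ.1 i j (fun hc => hij (Fin.ext hc.symm)) hsucc, mul_zero, zero_mul]

lemma norm_exp_diag_le {v : Fin d → ℂ} {κ t : ℝ} (ht : 0 ≤ t) (hκ : ∀ i, κ ≤ (v i).re) :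
    ‖NormedSpace.exp (-(t • Matrix.diagonal v))‖ ≤ Real.exp (-(κ * t)) := by
  have h1 : -(t • Matrix.diagonal v) = Matrix.diagonal (fun i => -(t • v i)) := by
    rw [← Matrix.diagonal_smul, ← Matrix.diagonal_neg]
    rfl
  rw [h1, Matrix.exp_diagonal]
  refine opNorm_diagonal_le (Real.exp_pos _).le fun i => ?_
  rw [Pi.coe_exp]
  rw [show (NormedSpace.exp (-(t • v i)) : ℂ) = Complex.exp (-(t • v i)) by
    rw [← Complex.exp_eq_exp_ℂ]]
  rw [Complex.norm_exp]
  refine Real.exp_le_exp.mpr ?_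
  have hre : (-(t • v i)).re = -(t * (v i).re) := by
    simp [Complex.smul_re]
  rw [hre, mul_comm κ t]
  exact neg_le_neg (mul_le_mul_of_nonneg_left (hκ i) ht)

lemma final_complex_bound {J Q : Matrix (Fin d) (Fin d) ℂ} (hJ : IsJordanNF J)
    (hQ : IsUnit Q) (hM : (Q * Qᴴ).IsHermitian) {κ' κlo κhi t : ℝ} (ht : 0 ≤ t)
    (hκ'_le : ∀ i, κ' ≤ (J i i).re)
    (hκlo_le : ∀ i, κlo ≤ hM.eigenvalues i) (hκlo_pos : 0 < κlo)
    (hκhi_ge : ∀ i, hM.eigenvalues i ≤ κhi) (hκhi_pos : 0 < κhi) :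
    ‖NormedSpace.exp (Q * (-(t • J)) * Q⁻¹)‖ ≤
      Real.sqrt (κhi / κlo) * Real.exp ((1 - κ') * t) := by
  obtain ⟨u, hu⟩ := hQ
  rw [← hu, ← Matrix.coe_units_inv, Matrix.exp_units_conj u]
  set v : Fin d → ℂ := fun i => J i i with hv
  set D := Matrix.diagonal v with hD
  set N := J - D with hN
  have hsplit : -(t • J) = -(t • D) + -(t • N) := by
    rw [hN]
    module
  have hDN : Commute D N := by
    have hDJ : Commute D J := commute_diag hJ
    exact hDJ.sub_right (Commute.refl D)
  have hcomm : Commute (-(t • D)) (-(t • N)) :=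
    ((hDN.smul_left t).smul_right t).neg_left.neg_right
  rw [hsplit, Matrix.exp_add_of_commute _ _ hcomm]
  have hQn : ‖(↑u : Matrix (Fin d) (Fin d) ℂ)‖ ≤ Real.sqrt κhi := by
    have hcc := Matrix.l2_opNorm_conjTranspose Qᴴ
    rw [Matrix.conjTranspose_conjTranspose] at hcc
    rw [hu, hcc]
    exact norm_conjTranspose_le hM hκhi_pos.le hκhi_ge
  have hQin : ‖((↑u⁻¹ : Matrix (Fin d) (Fin d) ℂ))‖ ≤ (Real.sqrt κlo)⁻¹ := by
    rw [Matrix.coe_units_inv, hu]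
    exact norm_inv_le ⟨u, hu⟩ hM hκlo_pos hκlo_le
  have hDn : ‖NormedSpace.exp (-(t • D))‖ ≤ Real.exp (-(κ' * t)) :=
    norm_exp_diag_le ht hκ'_le
  have hNn : ‖NormedSpace.exp (-(t • N))‖ ≤ Real.exp t := by
    refine le_trans (norm_exp_le _) (Real.exp_le_exp.mpr ?_)
    rw [norm_neg, norm_smul, Real.norm_eq_abs, abs_of_nonneg ht]
    have hnil := norm_nilpotent_le hJ
    rw [← hN] at hnil
    exact mul_le_of_le_one_right ht hnil
  have step : ‖(↑u : Matrix (Fin d) (Fin d) ℂ) *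
        (NormedSpace.exp (-(t • D)) * NormedSpace.exp (-(t • N))) *
        (↑u⁻¹ : Matrix (Fin d) (Fin d) ℂ)‖ ≤
      ‖(↑u : Matrix (Fin d) (Fin d) ℂ)‖ *
        (‖NormedSpace.exp (-(t • D))‖ * ‖NormedSpace.exp (-(t • N))‖) *
        ‖(↑u⁻¹ : Matrix (Fin d) (Fin d) ℂ)‖ := by
    calc ‖(↑u : Matrix (Fin d) (Fin d) ℂ) *
          (NormedSpace.exp (-(t • D)) * NormedSpace.exp (-(t • N))) *
          (↑u⁻¹ : Matrix (Fin d) (Fin d) ℂ)‖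
        ≤ ‖(↑u : Matrix (Fin d) (Fin d) ℂ) *
            (NormedSpace.exp (-(t • D)) * NormedSpace.exp (-(t • N)))‖ *
            ‖(↑u⁻¹ : Matrix (Fin d) (Fin d) ℂ)‖ := norm_mul_le _ _
      _ ≤ (‖(↑u : Matrix (Fin d) (Fin d) ℂ)‖ *
            ‖NormedSpace.exp (-(t • D)) * NormedSpace.exp (-(t • N))‖) *
            ‖(↑u⁻¹ : Matrix (Fin d) (Fin d) ℂ)‖ :=
          mul_le_mul_of_nonneg_right (norm_mul_le _ _) (norm_nonneg _)
      _ ≤ (‖(↑u : Matrix (Fin d) (Fin d) ℂ)‖ *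
            (‖NormedSpace.exp (-(t • D))‖ * ‖NormedSpace.exp (-(t • N))‖)) *
            ‖(↑u⁻¹ : Matrix (Fin d) (Fin d) ℂ)‖ :=
          mul_le_mul_of_nonneg_right
            (mul_le_mul_of_nonneg_left (norm_mul_le _ _) (norm_nonneg _)) (norm_nonneg _)
  refine le_trans step ?_
  have hfinal : ‖(↑u : Matrix (Fin d) (Fin d) ℂ)‖ *
        (‖NormedSpace.exp (-(t • D))‖ * ‖NormedSpace.exp (-(t • N))‖) *
        ‖(↑u⁻¹ : Matrix (Fin d) (Fin d) ℂ)‖ ≤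
      Real.sqrt κhi * (Real.exp (-(κ' * t)) * Real.exp t) * (Real.sqrt κlo)⁻¹ := by
    exact mul_le_mul
      (mul_le_mul hQn
        (mul_le_mul hDn hNn (norm_nonneg _) (Real.exp_pos _).le)
        (mul_nonneg (norm_nonneg _) (norm_nonneg _)) (Real.sqrt_nonneg _))
      hQin (norm_nonneg _)
      (mul_nonneg (Real.sqrt_nonneg _)
        (mul_nonneg (Real.exp_pos _).le (Real.exp_pos _).le))
  refine le_trans hfinal (le_of_eq ?_)
  rw [← Real.exp_add, show -(κ' * t) + t = (1 - κ') * t by ring,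
    Real.sqrt_div hκhi_pos.le, div_eq_mul_inv]
  ring

end MatrixExpAux

/-- Lemma 5.2 (estimate `|e^{-A₀ t}| ≤ √(κ̄(QQᴴ)/κ̲(QQᴴ)) e^{(1-κ'(A₀))t}`). -/
theorem matrix_exp_neg_opNorm_le
    {d : ℕ} (hd : 1 ≤ d)
    (A₀ : Matrix (Fin d) (Fin d) ℝ) (Q J : Matrix (Fin d) (Fin d) ℂ)
    (hQ : IsUnit Q) (hJ : IsJordanNF J)
    (hA : A₀.map (Complex.ofReal) = Q * J * Q⁻¹)
    (κ' κlo κhi : ℝ)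
    (hκ' : κ' = sInf {r : ℝ | ∃ i : Fin d, r = (J i i).re})
    (hM : (Q * Qᴴ).IsHermitian)
    (hκlo : κlo = sInf {r : ℝ | ∃ i : Fin d, r = hM.eigenvalues i})
    (hκhi : κhi = sSup {r : ℝ | ∃ i : Fin d, r = hM.eigenvalues i})
    (t : ℝ) (ht : 0 ≤ t) :
    ‖Matrix.toEuclideanCLM (𝕜 := ℝ) (NormedSpace.exp (-(t • A₀)))‖ ≤
      Real.sqrt (κhi / κlo) * Real.exp ((1 - κ') * t) := by
  haveI : Nonempty (Fin d) := Fin.pos_iff_nonempty.mp hd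
  have hrange : {r : ℝ | ∃ i : Fin d, r = hM.eigenvalues i} = Set.range hM.eigenvalues := by
    ext r
    simp [eq_comm]
  have hκlo_le : ∀ i, κlo ≤ hM.eigenvalues i := by
    intro i
    rw [hκlo, hrange]
    exact csInf_le (Set.finite_range _).bddBelow ⟨i, rfl⟩
  have hκhi_ge : ∀ i, hM.eigenvalues i ≤ κhi := by
    intro i
    rw [hκhi, hrange]
    exact le_csSup (Set.finite_range _).bddAbove ⟨i, rfl⟩
  have hκlo_pos : 0 < κlo := by
    have hmem : κlo ∈ Set.range hM.eigenvalues := by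
      rw [hκlo, hrange]
      exact (Set.range_nonempty _).csInf_mem (Set.finite_range _)
    obtain ⟨i, hi⟩ := hmem
    exact hi ▸ (MatrixExpAux.posDef_mul_conjTranspose_self hQ).eigenvalues_pos i
  have hκhi_pos : 0 < κhi :=
    lt_of_lt_of_le hκlo_pos ((hκlo_le (Classical.arbitrary _)).trans
      (hκhi_ge (Classical.arbitrary _)))
  have hκ'_le : ∀ i, κ' ≤ (J i i).re := by
    intro i
    have hr : {r : ℝ | ∃ i : Fin d, r = (J i i).re} = Set.range (fun i => (J i i).re) := by
      ext r
      simp [eq_comm]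
    rw [hκ', hr]
    exact csInf_le (Set.finite_range _).bddBelow ⟨i, rfl⟩
  refine le_trans (MatrixExpAux.real_transfer _) ?_
  rw [MatrixExpAux.map_ofReal_exp]
  have hmap : (-(t • A₀)).map Complex.ofReal = -(t • A₀.map Complex.ofReal) := by
    ext i j
    simp [Matrix.map_apply]
  rw [hmap, hA]
  have hconj : -(t • (Q * J * Q⁻¹)) = Q * (-(t • J)) * Q⁻¹ := by
    rw [Matrix.mul_neg, Matrix.neg_mul, Matrix.mul_smul, Matrix.smul_mul]
  rw [hconj]
  exact MatrixExpAux.final_complex_bound hJ hQ hM ht hκ'_le hκlo_le hκlo_pos hκhi_ge hκhi_pos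
end

section
/- Let d ≥ 1 and let J ∈ ℂ^{d×d} be in Jordan normal form. Let κ' := min_{1≤i≤d} Re(J_{ii}) be the smallest real part of the eigenvalues of J. Then for every t ≥ 0 and all x, y ∈ ℂ^d: |⟨exp(−tJ)x, y⟩| ≤ e^{(1−κ')t} |x| |y|, where ⟨·,·⟩ is the standard Hermitian inner product on ℂ^d and |·| the associated norm. -/
open scoped Matrix

lemma aux_norm_exp_le {𝔸 : Type*} [NormedRing 𝔸] [NormedAlgebra ℂ 𝔸] [CompleteSpace 𝔸]
    [NormOneClass 𝔸] (A : 𝔸) : ‖NormedSpace.exp A‖ ≤ Real.exp ‖A‖ := by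
  rw [NormedSpace.exp_eq_tsum ℂ]
  refine (norm_tsum_le_tsum_norm (NormedSpace.norm_expSeries_summable' A)).trans ?_
  rw [Real.exp_eq_exp_ℝ, NormedSpace.exp_eq_tsum ℝ]
  refine (NormedSpace.norm_expSeries_summable' (𝕂 := ℂ) A).tsum_le_tsum (fun n => ?_)
    (NormedSpace.expSeries_summable' (𝕂 := ℝ) ‖A‖)
  rw [norm_smul, smul_eq_mul, norm_inv, Complex.norm_natCast]
  have hpow : ‖A ^ n‖ ≤ ‖A‖ ^ n := by
    cases n with
    | zero => simp
    | succ m => exact norm_pow_le' A m.succ_pos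
  exact mul_le_mul_of_nonneg_left hpow (by positivity)

lemma aux_clm_exp {d : ℕ} (M : Matrix (Fin d) (Fin d) ℂ) :
    Matrix.toEuclideanCLM (𝕜 := ℂ) (NormedSpace.exp M)
      = NormedSpace.exp (Matrix.toEuclideanCLM (𝕜 := ℂ) M) := by
  letI : SeminormedRing (Matrix (Fin d) (Fin d) ℂ) := Matrix.linftyOpSemiNormedRing
  letI : NormedRing (Matrix (Fin d) (Fin d) ℂ) := Matrix.linftyOpNormedRing
  letI : NormedAlgebra ℂ (Matrix (Fin d) (Fin d) ℂ) := Matrix.linftyOpNormedAlgebra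
  letI : NormedAlgebra ℚ (Matrix (Fin d) (Fin d) ℂ) := Matrix.linftyOpNormedAlgebra
  have hc : Continuous (Matrix.toEuclideanCLM (n := Fin d) (𝕜 := ℂ)) :=
    LinearMap.continuous_of_finiteDimensional
      (Matrix.toEuclideanCLM (n := Fin d) (𝕜 := ℂ)).toAlgEquiv.toLinearMap
  exact NormedSpace.map_exp (Matrix.toEuclideanCLM (n := Fin d) (𝕜 := ℂ)) hc M

lemma aux_opNorm_le {d : ℕ} (σ : Equiv.Perm (Fin d)) (A : Matrix (Fin d) (Fin d) ℂ) {C : ℝ}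
    (hC : 0 ≤ C) (hzero : ∀ i j, j ≠ σ i → A i j = 0) (hbound : ∀ i, ‖A i (σ i)‖ ≤ C) :
    ‖Matrix.toEuclideanCLM (𝕜 := ℂ) A‖ ≤ C := by
  refine ContinuousLinearMap.opNorm_le_bound _ hC fun x => ?_
  have happ : ∀ i, (Matrix.toEuclideanCLM (𝕜 := ℂ) A x) i = A i (σ i) * x (σ i) := by
    intro i
    have h1 := congrFun (Matrix.ofLp_toEuclideanCLM (𝕜 := ℂ) A x) i
    rw [show (Matrix.toEuclideanCLM (𝕜 := ℂ) A x) i = (A *ᵥ WithLp.ofLp x) i from h1,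
      Matrix.mulVec, dotProduct]
    rw [Finset.sum_eq_single (σ i)]
    · intro b _ hb; rw [hzero i b hb, zero_mul]
    · intro h; exact absurd (Finset.mem_univ _) h
  rw [EuclideanSpace.norm_eq, EuclideanSpace.norm_eq]
  have key : ∑ i, ‖(Matrix.toEuclideanCLM (𝕜 := ℂ) A x) i‖ ^ 2
      ≤ C ^ 2 * ∑ i, ‖x i‖ ^ 2 := by
    rw [← Equiv.sum_comp σ (fun i => ‖x i‖ ^ 2), Finset.mul_sum]
    refine Finset.sum_le_sum fun i _ => ?_
    rw [happ i, norm_mul, mul_pow]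
    have := hbound i
    gcongr
  calc Real.sqrt (∑ i, ‖(Matrix.toEuclideanCLM (𝕜 := ℂ) A x) i‖ ^ 2)
      ≤ Real.sqrt (C ^ 2 * ∑ i, ‖x i‖ ^ 2) := Real.sqrt_le_sqrt key
    _ = C * Real.sqrt (∑ i, ‖x i‖ ^ 2) := by
        rw [Real.sqrt_mul (sq_nonneg C), Real.sqrt_sq hC]

theorem aux_jordan_exp_neg_inner_le
    {d : ℕ} (hd : 1 ≤ d)
    (J : Matrix (Fin d) (Fin d) ℂ)
    (hJ : (∀ i j : Fin d, (j : ℕ) ≠ (i : ℕ) → (j : ℕ) ≠ (i : ℕ) + 1 → J i j = 0) ∧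
      (∀ i j : Fin d, (j : ℕ) = (i : ℕ) + 1 → J i j = 0 ∨ J i j = 1) ∧
      (∀ i j : Fin d, (j : ℕ) = (i : ℕ) + 1 → J i j = 1 → J i i = J j j))
    (κ' : ℝ) (hκ' : κ' = sInf {r : ℝ | ∃ i : Fin d, r = (J i i).re})
    (t : ℝ) (ht : 0 ≤ t) (x y : EuclideanSpace ℂ (Fin d)) :
    ‖(inner ℂ (Matrix.toEuclideanCLM (𝕜 := ℂ) (NormedSpace.exp (-((t : ℂ) • J))) x) y : ℂ)‖ ≤
      Real.exp ((1 - κ') * t) * ‖x‖ * ‖y‖ := by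
  classical
  obtain ⟨e, rfl⟩ : ∃ e, d = e + 1 := ⟨d - 1, by omega⟩
  obtain ⟨h0, h1, h2⟩ := hJ
  set D : Matrix (Fin (e+1)) (Fin (e+1)) ℂ := Matrix.diagonal (fun i => J i i) with hDdef
  set N : Matrix (Fin (e+1)) (Fin (e+1)) ℂ := J - D with hNdef
  have hNoff : ∀ i j : Fin (e+1), (j:ℕ) ≠ (i:ℕ)+1 → N i j = 0 := by
    intro i j h
    rcases eq_or_ne j i with rfl | hne
    · simp [hNdef, hDdef, Matrix.diagonal_apply_eq]
    · have hji : (j:ℕ) ≠ (i:ℕ) := fun hv => hne (Fin.ext hv)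
      have hJ0 := h0 i j hji h
      have hD0 : D i j = 0 := Matrix.diagonal_apply_ne _ (Ne.symm hne)
      simp [hNdef, hJ0, hD0]
  have hNsd : ∀ i j : Fin (e+1), (j:ℕ) = (i:ℕ)+1 → N i j = J i j := by
    intro i j h
    have hne : i ≠ j := fun hij => by rw [hij] at h; omega
    have hD0 : D i j = 0 := Matrix.diagonal_apply_ne _ hne
    simp [hNdef, hD0]
  have hσ : ∀ i : Fin (e+1),
      ((finRotate (e+1) i : Fin (e+1)) : ℕ) = if (i:ℕ) = e then 0 else (i:ℕ)+1 := by
    intro i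
    rw [finRotate_succ_apply, Fin.val_add_one]
    by_cases h : i = Fin.last e
    · rw [if_pos h, if_pos (by rw [h]; rfl)]
    · rw [if_neg h, if_neg (fun hv => h (Fin.ext (by simpa using hv)))]
  have hzeroN : ∀ i j, j ≠ finRotate (e+1) i → N i j = 0 := by
    intro i j hj
    refine hNoff i j fun hval => hj ?_
    have hie : (i:ℕ) ≠ e := by have := j.isLt; omega
    have : ((finRotate (e+1) i : Fin (e+1)) : ℕ) = (i:ℕ)+1 := by rw [hσ, if_neg hie]
    exact Fin.ext (by omega)
  have hboundN : ∀ i, ‖N i (finRotate (e+1) i)‖ ≤ 1 := by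
    intro i
    by_cases h : (i:ℕ) = e
    · have hv : ((finRotate (e+1) i : Fin (e+1)) : ℕ) ≠ (i:ℕ)+1 := by
        rw [hσ, if_pos h]; omega
      rw [hNoff i _ hv]; simp
    · have hv : ((finRotate (e+1) i : Fin (e+1)) : ℕ) = (i:ℕ)+1 := by rw [hσ, if_neg h]
      rcases h1 i _ hv with h' | h' <;> rw [hNsd i _ hv, h'] <;> simp
  have hcommDN : Commute D N := by
    show D * N = N * D
    ext i j
    rw [hDdef, Matrix.diagonal_mul, Matrix.mul_diagonal]
    rcases eq_or_ne (N i j) 0 with h | h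
    · rw [h, mul_zero, zero_mul]
    · have hval : (j:ℕ) = (i:ℕ)+1 := by
        by_contra hc; exact h (hNoff i j hc)
      have hJ1 : J i j = 1 := by
        rcases h1 i j hval with h' | h'
        · exact absurd (by rw [hNsd i j hval, h']) h
        · exact h'
      rw [h2 i j hval hJ1, mul_comm]
  have hJDN : J = D + N := by rw [hNdef]; abel
  have hcomm' : Commute (-((t:ℂ) • D)) (-((t:ℂ) • N)) :=
    (((hcommDN.smul_left ((t:ℂ))).smul_right ((t:ℂ))).neg_left).neg_right
  have hexp : NormedSpace.exp (-((t:ℂ) • J))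
      = NormedSpace.exp (-((t:ℂ) • D)) * NormedSpace.exp (-((t:ℂ) • N)) := by
    rw (occs := .pos [1]) [hJDN]
    rw [smul_add, neg_add]
    exact Matrix.exp_add_of_commute _ _ hcomm'
  have hκle : ∀ i : Fin (e+1), κ' ≤ (J i i).re := by
    intro i
    have hset : {r : ℝ | ∃ i : Fin (e+1), r = (J i i).re}
        = Set.range (fun i : Fin (e+1) => (J i i).re) := by
      ext r; exact ⟨fun ⟨i, h⟩ => ⟨i, h.symm⟩, fun ⟨i, h⟩ => ⟨i, h.symm⟩⟩
    rw [hκ', hset]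
    exact csInf_le (Set.finite_range _).bddBelow ⟨i, rfl⟩
  have hdiag : NormedSpace.exp (-((t:ℂ) • D))
      = Matrix.diagonal (fun i => Complex.exp (-((t:ℂ) * J i i))) := by
    rw [hDdef, ← Matrix.diagonal_smul, Matrix.diagonal_neg, Matrix.exp_diagonal]
    refine congrArg Matrix.diagonal ?_
    funext i
    rw [Pi.coe_exp, ← Complex.exp_eq_exp_ℂ]
    simp [smul_eq_mul]
  have hdiagnorm : ‖Matrix.toEuclideanCLM (𝕜 := ℂ) (NormedSpace.exp (-((t:ℂ) • D)))‖
      ≤ Real.exp (-κ' * t) := by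
    rw [hdiag]
    refine aux_opNorm_le (Equiv.refl _) _ (Real.exp_nonneg _) ?_ ?_
    · intro i j hne
      exact Matrix.diagonal_apply_ne _ (Ne.symm (by simpa using hne))
    · intro i
      simp only [Equiv.refl_apply, Matrix.diagonal_apply_eq]
      rw [Complex.norm_exp]
      apply Real.exp_le_exp.2
      have h1 := hκle i
      have hre : (-((t:ℂ) * J i i)).re = -(t * (J i i).re) := by
        simp [Complex.mul_re]
      rw [hre]
      nlinarith
  have hNnorm : ‖Matrix.toEuclideanCLM (𝕜 := ℂ) N‖ ≤ 1 :=
    aux_opNorm_le (finRotate (e+1)) N zero_le_one hzeroN hboundN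
  have hexpNnorm : ‖Matrix.toEuclideanCLM (𝕜 := ℂ) (NormedSpace.exp (-((t:ℂ) • N)))‖
      ≤ Real.exp t := by
    rw [aux_clm_exp]
    refine (aux_norm_exp_le _).trans (Real.exp_le_exp.2 ?_)
    refine aux_opNorm_le (finRotate (e+1)) (-((t:ℂ) • N)) ht ?_ ?_
    · intro i j hj
      simp [hzeroN i j hj]
    · intro i
      have hb := hboundN i
      rw [Matrix.neg_apply, Matrix.smul_apply, norm_neg, norm_smul, Complex.norm_real]
      calc |t| * ‖N i (finRotate (e+1) i)‖ ≤ |t| * 1 :=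
            mul_le_mul_of_nonneg_left hb (abs_nonneg t)
        _ = t := by rw [mul_one, abs_of_nonneg ht]
  rw [hexp, map_mul]
  calc ‖(inner ℂ ((Matrix.toEuclideanCLM (𝕜 := ℂ) (NormedSpace.exp (-((t:ℂ) • D)))
          * Matrix.toEuclideanCLM (𝕜 := ℂ) (NormedSpace.exp (-((t:ℂ) • N)))) x) y : ℂ)‖
      ≤ ‖(Matrix.toEuclideanCLM (𝕜 := ℂ) (NormedSpace.exp (-((t:ℂ) • D)))
          * Matrix.toEuclideanCLM (𝕜 := ℂ) (NormedSpace.exp (-((t:ℂ) • N)))) x‖ * ‖y‖ :=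
        norm_inner_le_norm _ _
    _ ≤ (‖Matrix.toEuclideanCLM (𝕜 := ℂ) (NormedSpace.exp (-((t:ℂ) • D)))
          * Matrix.toEuclideanCLM (𝕜 := ℂ) (NormedSpace.exp (-((t:ℂ) • N)))‖ * ‖x‖) * ‖y‖ := by
        gcongr
        exact ContinuousLinearMap.le_opNorm _ _
    _ ≤ ((Real.exp (-κ' * t) * Real.exp t) * ‖x‖) * ‖y‖ := by
        gcongr
        exact (norm_mul_le _ _).trans (mul_le_mul hdiagnorm hexpNnorm (norm_nonneg _)
          (Real.exp_nonneg _))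
    _ = Real.exp ((1 - κ') * t) * ‖x‖ * ‖y‖ := by
        rw [← Real.exp_add]; ring_nf

/-- For a Jordan-normal-form matrix `J` with `κ'` the smallest real part of its eigenvalues,
`|⟨e^{-tJ} x, y⟩| ≤ e^{(1-κ')t} |x| |y|` for all `t ≥ 0` and `x, y ∈ ℂ^d`. -/
theorem jordan_exp_neg_inner_le
    {d : ℕ} (hd : 1 ≤ d)
    (J : Matrix (Fin d) (Fin d) ℂ) (hJ : IsJordanNF J)
    (κ' : ℝ) (hκ' : κ' = sInf {r : ℝ | ∃ i : Fin d, r = (J i i).re})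
    (t : ℝ) (ht : 0 ≤ t) (x y : EuclideanSpace ℂ (Fin d)) :
    ‖(inner ℂ (Matrix.toEuclideanCLM (𝕜 := ℂ) (NormedSpace.exp (-((t : ℂ) • J))) x) y : ℂ)‖ ≤
      Real.exp ((1 - κ') * t) * ‖x‖ * ‖y‖ :=
  aux_jordan_exp_neg_inner_le hd J hJ κ' hκ' t ht x y
end

section
/- Let H be a real inner product space, let A, T : H → H be linear maps, and let λ₀ > 0, λ₁ ∈ ℝ, λ₂ > 0, λ₃ ≥ 0. Assume the anti-monotonicity inequality: for every η ∈ H, λ₀⟨Aη, η⟩ + λ₁⟨Tη, η⟩ + ‖Aη‖² + λ₂‖Tη‖² − λ₃‖η‖² ≤ 0. Then for every η ∈ H: ‖Tη‖ ≤ C‖η‖, where C := (|λ₁| + √(λ₁² + λ₂λ₀² + 4λ₂λ₃)) / (2λ₂). -/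
/-- If linear maps `A, T` on a real inner product space satisfy the anti-monotonicity
inequality `λ₀⟨Aη,η⟩ + λ₁⟨Tη,η⟩ + ‖Aη‖² + λ₂‖Tη‖² - λ₃‖η‖² ≤ 0` for all `η`, then
`‖Tη‖ ≤ C‖η‖` with `C = (|λ₁| + √(λ₁² + λ₂λ₀² + 4λ₂λ₃))/(2λ₂)`. -/
theorem antiMonotone_implies_lipschitz
    {H : Type*} [NormedAddCommGroup H] [InnerProductSpace ℝ H]
    (A T : H →ₗ[ℝ] H) (l0 l1 l2 l3 : ℝ)
    (h0 : 0 < l0) (h2 : 0 < l2) (h3 : 0 ≤ l3)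
    (hanti : ∀ η : H,
      l0 * (inner ℝ (A η) η : ℝ) + l1 * (inner ℝ (T η) η : ℝ) +
        ‖A η‖ ^ 2 + l2 * ‖T η‖ ^ 2 - l3 * ‖η‖ ^ 2 ≤ 0)
    (η : H) :
    ‖T η‖ ≤ (|l1| + Real.sqrt (l1 ^ 2 + l2 * l0 ^ 2 + 4 * l2 * l3)) / (2 * l2) * ‖η‖ := by
  set t := ‖T η‖ with ht
  set s := ‖η‖ with hs
  set a := ‖A η‖ with ha
  have hts : 0 ≤ t := norm_nonneg _
  have hss : 0 ≤ s := norm_nonneg _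
  have has : 0 ≤ a := norm_nonneg _
  have cs1 : |(inner ℝ (A η) η : ℝ)| ≤ a * s := abs_real_inner_le_norm _ _
  have cs2 : |(inner ℝ (T η) η : ℝ)| ≤ t * s := abs_real_inner_le_norm _ _
  have key : l2 * t ^ 2 - |l1| * t * s - (l3 + l0 ^ 2 / 4) * s ^ 2 ≤ 0 := by
    have h := hanti η
    have h1 : l0 * (-(a * s)) ≤ l0 * (inner ℝ (A η) η : ℝ) :=
      mul_le_mul_of_nonneg_left (abs_le.mp cs1).1 h0.le
    have h2' : -(|l1| * (t * s)) ≤ l1 * (inner ℝ (T η) η : ℝ) := by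
      have habs : |l1 * (inner ℝ (T η) η : ℝ)| ≤ |l1| * (t * s) := by
        rw [abs_mul]
        exact mul_le_mul_of_nonneg_left cs2 (abs_nonneg _)
      linarith [neg_abs_le (l1 * (inner ℝ (T η) η : ℝ)), habs]
    linarith [sq_nonneg (a - l0 * s / 2)]
  set D := l1 ^ 2 + l2 * l0 ^ 2 + 4 * l2 * l3 with hD
  have hDnn : 0 ≤ D := by positivity
  have hsq : (2 * l2 * t - |l1| * s) ^ 2 ≤ D * s ^ 2 := by
    have hm : l2 * (l2 * t ^ 2 - |l1| * t * s - (l3 + l0 ^ 2 / 4) * s ^ 2) ≤ 0 :=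
      mul_nonpos_of_nonneg_of_nonpos h2.le key
    have habs : |l1| ^ 2 = l1 ^ 2 := sq_abs l1
    nlinarith [hm, habs]
  have hsqrt : 2 * l2 * t - |l1| * s ≤ Real.sqrt D * s := by
    have h1 : Real.sqrt ((2 * l2 * t - |l1| * s) ^ 2) ≤ Real.sqrt (D * s ^ 2) :=
      Real.sqrt_le_sqrt hsq
    rw [Real.sqrt_sq_eq_abs, Real.sqrt_mul hDnn, Real.sqrt_sq hss] at h1
    exact le_trans (le_abs_self _) h1
  rw [div_mul_eq_mul_div, le_div_iff₀ (by positivity)]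
  ring_nf
  ring_nf at hsqrt
  linarith
end

section
/- Let a, b > 0 and k ≥ 1, set θ₃ := 1 + a·k·(1 + b·k + √((1 + b·k)² − 1)), and for θ ≥ θ₃ define L(θ) := (θ − 1 − a·k − √((θ − 1 − a·k)² − 2·a·b·k²·(θ − 1))) / (a·k). Then L is strictly decreasing on [θ₃, ∞): for all θ₃ ≤ θ < θ', L(θ') < L(θ). -/
/-- The a priori bound `L(θ) = (θ - 1 - ak - √((θ - 1 - ak)² - 2abk²(θ - 1)))/(ak)` is
strictly decreasing on `[θ₃, ∞)`, where `θ₃ = 1 + ak(1 + bk + √((1 + bk)² - 1))`. -/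
theorem apriori_bound_strict_anti
    (a b k : ℝ) (ha : 0 < a) (hb : 0 < b) (hk : 1 ≤ k)
    (θ₃ : ℝ) (hθ₃ : θ₃ = 1 + a * k * (1 + b * k + Real.sqrt ((1 + b * k) ^ 2 - 1)))
    (L : ℝ → ℝ)
    (hL : ∀ θ : ℝ, L θ =
      (θ - 1 - a * k - Real.sqrt ((θ - 1 - a * k) ^ 2 - 2 * a * b * k ^ 2 * (θ - 1))) / (a * k)) :
    ∀ θ θ' : ℝ, θ₃ ≤ θ → θ < θ' → L θ' < L θ := by
  have hk0 : (0:ℝ) < k := lt_of_lt_of_le one_pos hk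
  set c := a * k with hc_def
  have hc : 0 < c := mul_pos ha hk0
  set m := 2 * a * b * k ^ 2 with hm_def
  have hm : 0 < m := by rw [hm_def]; positivity
  set r := Real.sqrt ((1 + b * k) ^ 2 - 1) with hr_def
  have hbk : 0 < b * k := mul_pos hb hk0
  have hr2 : r ^ 2 = (1 + b * k) ^ 2 - 1 := Real.sq_sqrt (by nlinarith)
  have hr0 : 0 < r := Real.sqrt_pos.2 (by nlinarith)
  have hθ₃' : θ₃ - 1 = c * (1 + b * k + r) := by rw [hθ₃]; ring
  have hq3 : (θ₃ - 1 - c) ^ 2 - m * (θ₃ - 1) = 0 := by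
    rw [hθ₃', hm_def, hc_def]
    linear_combination ((a * k) ^ 2) * hr2
  have hq'3 : 0 < 2 * (θ₃ - 1 - c) - m := by
    rw [hθ₃', hm_def, hc_def]
    have : 2 * a * b * k ^ 2 = 2 * (b * k) * (a * k) := by ring
    nlinarith [mul_pos (mul_pos ha hk0) hr0]
  have hqpos : ∀ x, θ₃ < x → 0 < (x - 1 - c) ^ 2 - m * (x - 1) := by
    intro x hx
    nlinarith [hq3, mul_pos (sub_pos.2 hx) hq'3, sq_nonneg (x - θ₃)]
  have key : StrictAntiOn
      (fun θ => (θ - 1 - c - Real.sqrt ((θ - 1 - c) ^ 2 - m * (θ - 1))) / c)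
      (Set.Ici θ₃) := by
    apply strictAntiOn_of_deriv_neg (convex_Ici θ₃)
    · apply ContinuousOn.div_const
      apply ContinuousOn.sub
      · fun_prop
      · exact (Real.continuous_sqrt.comp (by continuity)).continuousOn
    · intro x hx
      rw [interior_Ici] at hx
      have hx' : θ₃ < x := hx
      have hq := hqpos x hx'
      have hq' : 0 < 2 * (x - 1 - c) - m := by linarith [hq'3]
      have hsq : Real.sqrt ((x - 1 - c) ^ 2 - m * (x - 1)) ^ 2
          = (x - 1 - c) ^ 2 - m * (x - 1) := Real.sq_sqrt hq.le
      have hsqpos : 0 < Real.sqrt ((x - 1 - c) ^ 2 - m * (x - 1)) := Real.sqrt_pos.2 hq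
      have hQ : HasDerivAt (fun θ => (θ - 1 - c) ^ 2 - m * (θ - 1))
          (2 * (x - 1 - c) - m) x := by
        have h1 : HasDerivAt (fun θ : ℝ => (θ - 1 - c) ^ 2) (2 * (x - 1 - c)) x := by
          have h := (((hasDerivAt_id x).sub_const 1).sub_const c).pow 2
          simpa [Pi.pow_def] using h
        have h2 : HasDerivAt (fun θ : ℝ => m * (θ - 1)) m x := by
          simpa using ((hasDerivAt_id x).sub_const 1).const_mul m
        simpa [Pi.sub_def] using h1.sub h2
      have hS : HasDerivAt (fun θ => Real.sqrt ((θ - 1 - c) ^ 2 - m * (θ - 1)))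
          (1 / (2 * Real.sqrt ((x - 1 - c) ^ 2 - m * (x - 1))) * (2 * (x - 1 - c) - m)) x :=
        (Real.hasDerivAt_sqrt hq.ne').comp x hQ
      have hF : HasDerivAt
          (fun θ => (θ - 1 - c - Real.sqrt ((θ - 1 - c) ^ 2 - m * (θ - 1))) / c)
          ((1 - 1 / (2 * Real.sqrt ((x - 1 - c) ^ 2 - m * (x - 1)))
              * (2 * (x - 1 - c) - m)) / c) x :=
        ((((hasDerivAt_id x).sub_const 1).sub_const c).sub hS).div_const c
      rw [hF.deriv]
      apply div_neg_of_neg_of_pos _ hc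
      rw [sub_neg, one_div, inv_mul_eq_div,
        lt_div_iff₀ (by positivity : (0:ℝ) < 2 * Real.sqrt ((x - 1 - c) ^ 2 - m * (x - 1)))]
      -- need 2√q < q'
      nlinarith [hsq, hsqpos, hq', mul_pos hm hc, sq_nonneg (2 * (x - 1 - c) - m)]
  intro θ θ' hθ hθθ'
  rw [hL θ, hL θ']
  exact key hθ (le_trans hθ hθθ'.le) hθθ'
end

section
/- Let a, b > 0 and k ≥ 1, set θ₃ := 1 + a·k·(1 + b·k + √((1 + b·k)² − 1)), and for θ ≥ θ₃ let L₀ := (θ − 1 − a·k − √((θ − 1 − a·k)² − 2·a·b·k²·(θ − 1))) / (a·k). Then 2(θ − 1) − a·k·(2 + L₀) > 0 and L₀ · (2(θ − 1) − a·k·(2 + L₀)) = 2·b·k·(θ − 1); equivalently, b·k + (a·b·k²·(2 + L₀)) / (2(θ − 1) − a·k·(2 + L₀)) = L₀. -/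
/-- The fixed-point identity satisfied by the a priori bound
`L₀ = (θ - 1 - ak - √((θ - 1 - ak)² - 2abk²(θ - 1)))/(ak)` for `θ ≥ θ₃`:
`2(θ-1) - ak(2+L₀) > 0`, `L₀(2(θ-1) - ak(2+L₀)) = 2bk(θ-1)`, and equivalently
`bk + abk²(2+L₀)/(2(θ-1) - ak(2+L₀)) = L₀`. -/
theorem apriori_bound_fixed_point
    (a b k θ : ℝ) (ha : 0 < a) (hb : 0 < b) (hk : 1 ≤ k)
    (θ₃ : ℝ) (hθ₃ : θ₃ = 1 + a * k * (1 + b * k + Real.sqrt ((1 + b * k) ^ 2 - 1)))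
    (hθ : θ₃ ≤ θ) (L₀ : ℝ)
    (hL₀ : L₀ =
      (θ - 1 - a * k -
        Real.sqrt ((θ - 1 - a * k) ^ 2 - 2 * a * b * k ^ 2 * (θ - 1))) / (a * k)) :
    0 < 2 * (θ - 1) - a * k * (2 + L₀) ∧
    L₀ * (2 * (θ - 1) - a * k * (2 + L₀)) = 2 * b * k * (θ - 1) ∧
    b * k + a * b * k ^ 2 * (2 + L₀) / (2 * (θ - 1) - a * k * (2 + L₀)) = L₀ := by
  have hak : 0 < a * k := by positivity
  have hE : (0:ℝ) ≤ (1 + b * k) ^ 2 - 1 := by nlinarith [mul_pos hb (lt_of_lt_of_le one_pos hk)]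
  set e := Real.sqrt ((1 + b * k) ^ 2 - 1) with he
  have he0 : 0 ≤ e := Real.sqrt_nonneg _
  have he2 : e ^ 2 = (1 + b * k) ^ 2 - 1 := Real.sq_sqrt hE
  have hc : a * k * (1 + b * k + e) ≤ θ - 1 := by rw [hθ₃] at hθ; linarith
  -- discriminant nonneg
  have hD : (0:ℝ) ≤ (θ - 1 - a * k) ^ 2 - 2 * a * b * k ^ 2 * (θ - 1) := by
    have h1 : a * k * e ≤ θ - 1 - a * k * (1 + b * k) := by linarith
    have h2 : 0 ≤ a * k * e := by positivity
    have h3 : (a * k * e) ^ 2 ≤ (θ - 1 - a * k * (1 + b * k)) ^ 2 :=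
      pow_le_pow_left₀ h2 h1 2
    have h4 : (θ - 1 - a * k) ^ 2 - 2 * a * b * k ^ 2 * (θ - 1) =
        (θ - 1 - a * k * (1 + b * k)) ^ 2 - (a * k * e) ^ 2 := by
      linear_combination (a * k) ^ 2 * he2
    linarith
  set s := Real.sqrt ((θ - 1 - a * k) ^ 2 - 2 * a * b * k ^ 2 * (θ - 1)) with hs
  have hs0 : 0 ≤ s := Real.sqrt_nonneg _
  have hs2 : s ^ 2 = (θ - 1 - a * k) ^ 2 - 2 * a * b * k ^ 2 * (θ - 1) := Real.sq_sqrt hD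
  have hcak : 0 < θ - 1 - a * k := by
    have hbk : 0 < b * k := mul_pos hb (lt_of_lt_of_le one_pos hk)
    nlinarith [mul_pos hak hbk, mul_nonneg hak.le he0]
  have hakL : a * k * L₀ = θ - 1 - a * k - s := by
    rw [hL₀]; field_simp
  have hP : 2 * (θ - 1) - a * k * (2 + L₀) = (θ - 1 - a * k) + s := by
    nlinarith [hakL]
  have hPpos : 0 < 2 * (θ - 1) - a * k * (2 + L₀) := by rw [hP]; linarith
  refine ⟨hPpos, ?_, ?_⟩
  · have key : (a * k) * (L₀ * (2 * (θ - 1) - a * k * (2 + L₀))) =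
        (a * k) * (2 * b * k * (θ - 1)) := by
      rw [hP]
      linear_combination ((θ - 1 - a * k) + s) * hakL - hs2
    exact mul_left_cancel₀ (ne_of_gt hak) key
  · have h2 : L₀ * (2 * (θ - 1) - a * k * (2 + L₀)) = 2 * b * k * (θ - 1) := by
      have key : (a * k) * (L₀ * (2 * (θ - 1) - a * k * (2 + L₀))) =
          (a * k) * (2 * b * k * (θ - 1)) := by
        rw [hP]
        linear_combination ((θ - 1 - a * k) + s) * hakL - hs2
      exact mul_left_cancel₀ (ne_of_gt hak) key
    have h3 : a * b * k ^ 2 * (2 + L₀) =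
        (L₀ - b * k) * (2 * (θ - 1) - a * k * (2 + L₀)) := by
      linear_combination -h2
    rw [h3, mul_div_cancel_right₀ _ (ne_of_gt hPpos)]
    ring
end
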